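/- For a single-source network with admissible nonnegative initial state x(0), the number of tokens that must be injected before the system reaches a global rest state is at most γ̄·|N|·(|N|−1)/2 − V(x(0)), where γ̄ bounds the arc costs and V(x(0)) is the initial total token count. -/

import Mathlib

def arcCost {V : Type*} (γ : V → V → ℤ) (p : List V) : ℤ :=
  ((p.zip p.tail).map fun q => γ q.1 q.2).sum

def IsWalk {V : Type*} (A : V → V → Prop) (i j : V) (p : List V) : Prop :=
  p.Chain' A ∧ p.head? = some i ∧ p.getLast? = some j

def IsPath {V : Type*} (A : V → V → Prop) (i j : V) (p : List V) : Prop :=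
  IsWalk A i j p ∧ p.Nodup

/-- A directed circuit: a walk of at least one arc whose first and last nodes coincide. -/
def IsCircuit {V : Type*} (A : V → V → Prop) (p : List V) : Prop :=
  p.Chain' A ∧ 2 ≤ p.length ∧ p.head? = p.getLast?

/-- in a single-source network with admissible nonnegative initial state,
the number of tokens to be injected before a global rest state is reached is at most
`γbar·|N|·(|N|−1)/2 − V(x 0)`.  Each injection either leaves the state unchanged
(the token exits at a sink) or adds one token at some node; once the state is left
unchanged it remains so forever (global rest state). -/
lemma crossing {V : Type*} (A : V → V → Prop) (S : V → Prop) :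
    ∀ (p : List V), p.Chain' A → ∀ j t, p.head? = some j → p.getLast? = some t →
      ¬ S j → S t → ∃ a b, A a b ∧ ¬ S a ∧ S b
  | [] => by simp
  | [v] => by
      intro _ j t hj ht hjS htS
      simp at hj ht; subst hj; subst ht; exact absurd htS hjS
  | v :: w :: rest => by
      intro hc j t hj ht hjS htS
      rw [List.head?_cons, Option.some_inj] at hj; subst hj
      rw [List.Chain', List.isChain_cons_cons] at hc
      by_cases hw : S w
      · exact ⟨v, w, hc.1, hjS, hw⟩
      · exact crossing A S (w :: rest) hc.2 w t rfl (by simpa using ht) hw htS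

lemma sum_le_aux {V : Type*} [Fintype V] [DecidableEq V]
    (A : V → V → Prop) (γ : V → V → ℤ) (γbar : ℤ) (T : Set V)
    (f : V → ℤ)
    (hγbar : 0 ≤ γbar)
    (hbound : ∀ i j, A i j → γ i j ≤ γbar)
    (hadm : ∀ a b, A a b → f a - f b ≤ γ a b)
    (hpos : ∀ i, 0 ≤ f i)
    (hsinks : ∀ t ∈ T, f t = 0)
    (hreach : ∀ i, ∃ t ∈ T, ∃ p, IsPath A i t p) :
    2 * ∑ i, f i ≤ γbar * (Fintype.card V : ℤ) * ((Fintype.card V : ℤ) - 1) := by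
  have key : ∀ k : ℕ, k ≤ Fintype.card V → ∃ S : Finset V, S.card = k ∧
      (∀ i ∈ S, ∀ j, j ∉ S → f i ≤ f j) ∧
      (∀ i ∈ S, f i ≤ γbar * ((k : ℤ) - 1)) ∧
      2 * ∑ i ∈ S, f i ≤ γbar * (k : ℤ) * ((k : ℤ) - 1) := by
    intro k
    induction k with
    | zero => intro _; exact ⟨∅, by simp⟩
    | succ k ih =>
      intro hk
      obtain ⟨S, hcard, hdc, hmax, hsum⟩ := ih (Nat.le_of_succ_le hk)
      have hne : Sᶜ.Nonempty := by
        rw [← Finset.card_pos, Finset.card_compl, hcard]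
        omega
      obtain ⟨j, hjc, hjmin⟩ := Finset.exists_min_image Sᶜ f hne
      rw [Finset.mem_compl] at hjc
      have hjmin' : ∀ j', j' ∉ S → f j ≤ f j' := by
        intro j' hj'; exact hjmin j' (Finset.mem_compl.2 hj')
      have hfj : f j ≤ γbar * (k : ℤ) := by
        obtain ⟨t, htT, p, ⟨hchain, hhead, hlast⟩, _⟩ := hreach j
        by_cases htS : t ∈ S
        · obtain ⟨a, b, hab, haS, hbS⟩ :=
            crossing A (· ∈ S) p hchain j t hhead hlast hjc htS
          have h1 : f j ≤ f a := hjmin' a haS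
          have h2 : f a - f b ≤ γ a b := hadm a b hab
          have h3 : γ a b ≤ γbar := hbound a b hab
          have h4 : f b ≤ γbar * ((k : ℤ) - 1) := hmax b hbS
          have : γbar * ((k : ℤ) - 1) + γbar = γbar * (k : ℤ) := by ring
          linarith
        · have h1 : f j ≤ f t := hjmin' t htS
          have h2 : f t = 0 := hsinks t htT
          have h3 : (0 : ℤ) ≤ γbar * (k : ℤ) :=
            mul_nonneg hγbar (by positivity)
          linarith
      refine ⟨insert j S, ?_, ?_, ?_, ?_⟩
      · rw [Finset.card_insert_of_notMem hjc, hcard]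
      · intro i hi j' hj'
        have hj'S : j' ∉ S := fun h => hj' (Finset.mem_insert_of_mem h)
        rcases Finset.mem_insert.1 hi with h | h
        · subst h; exact hjmin' j' hj'S
        · exact hdc i h j' hj'S
      · intro i hi
        have hcast : ((k + 1 : ℕ) : ℤ) - 1 = (k : ℤ) := by push_cast; ring
        rw [hcast]
        rcases Finset.mem_insert.1 hi with h | h
        · subst h; exact hfj
        · have := hmax i h
          have : γbar * ((k : ℤ) - 1) ≤ γbar * (k : ℤ) := by nlinarith
          linarith [hmax i h]
      · rw [Finset.sum_insert hjc]
        push_cast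
        nlinarith
  obtain ⟨S, hcard, _, _, hsum⟩ := key (Fintype.card V) le_rfl
  have : S = Finset.univ := Finset.eq_univ_of_card S hcard
  subst this
  exact hsum

theorem tokens_until_rest_state {V : Type*} [Fintype V] [DecidableEq V]
    (A : V → V → Prop) (γ : V → V → ℤ) (γbar : ℤ) (T : Set V) (s : V)
    (x : ℕ → V → ℤ)
    (hγbar : 0 ≤ γbar)
    (hbound : ∀ i j, A i j → γ i j ≤ γbar)
    (hcirc : ∀ c, IsCircuit A c → 0 < arcCost γ c)
    (hadm : ∀ k a b, A a b → x k a - x k b ≤ γ a b)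
    (hpos : ∀ k i, 0 ≤ x k i)
    (hsinks : ∀ k, ∀ t ∈ T, x k t = 0)
    (hreach : ∀ i, ∃ t ∈ T, ∃ p, IsPath A i t p)
    (hstep : ∀ k, x (k + 1) = x k ∨
      ∃ j, x (k + 1) = fun v => x k v + if v = j then 1 else 0)
    (hrest : ∀ k, x (k + 1) = x k → ∀ k', k ≤ k' → x k' = x k) :
    ∃ K : ℕ, (K : ℤ) ≤ γbar * (Fintype.card V : ℤ) * ((Fintype.card V : ℤ) - 1) / 2
        - ∑ i, x 0 i ∧
      ∀ k, K ≤ k → x k = x K := by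
  set n : ℤ := (Fintype.card V : ℤ) with hn
  -- bound on total token count at every time
  have hVle : ∀ k, ∑ i, x k i ≤ γbar * n * (n - 1) / 2 := by
    intro k
    have h2 : 2 * ∑ i, x k i ≤ γbar * n * (n - 1) :=
      sum_le_aux A γ γbar T (x k) hγbar hbound (hadm k) (hpos k) (hsinks k) hreach
    set c := γbar * n * (n - 1)
    set w := ∑ i, x k i
    omega
  set B : ℤ := γbar * n * (n - 1) / 2 with hB
  have hV0 : ∑ i, x 0 i ≤ B := hVle 0
  refine ⟨(B - ∑ i, x 0 i).toNat, ?_, ?_⟩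
  · rw [Int.toNat_of_nonneg (by linarith)]
  · set K := (B - ∑ i, x 0 i).toNat with hK
    have hKval : (K : ℤ) = B - ∑ i, x 0 i := Int.toNat_of_nonneg (by linarith)
    by_cases hex : ∃ m, m < K ∧ x (m + 1) = x m
    · obtain ⟨m, hm, hmeq⟩ := hex
      have hall := hrest m hmeq
      intro k hk
      rw [hall k (le_trans (Nat.le_of_lt hm) hk), hall K (Nat.le_of_lt hm)]
    · push_neg at hex
      -- every step before K is an increment
      have hsumK : ∀ m, m ≤ K → ∑ i, x m i = ∑ i, x 0 i + m := by
        intro m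
        induction m with
        | zero => simp
        | succ m ih =>
          intro hm
          have hm' : m < K := hm
          rcases hstep m with h | ⟨j, h⟩
          · exact absurd h (hex m hm')
          · have : ∑ i, x (m + 1) i = ∑ i, x m i + 1 := by
              rw [h, Finset.sum_add_distrib]
              simp
            rw [this, ih (Nat.le_of_lt hm')]
            push_cast; ring
      have hxK : ∑ i, x K i = B := by
        rw [hsumK K le_rfl, hKval]; ring
      have hKrest : x (K + 1) = x K := by
        rcases hstep K with h | ⟨j, h⟩
        · exact h
        · exfalso
          have h1 : ∑ i, x (K + 1) i = ∑ i, x K i + 1 := by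
            rw [h, Finset.sum_add_distrib]; simp
          have := hVle (K + 1)
          rw [h1, hxK] at this
          omega
      intro k hk
      rw [hrest K hKrest k hk]
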